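/- arXiv:1602.01409 — 3 statements merged into one kernel-verified Lean document; each statement's English description precedes it below -/
import Mathlib

section
/- Let π be a permutation of a finite set E into itself with no fixed points, and suppose the induced dependency graph (with edges {e, π(e)}) is a disjoint union of cycles. Then there exists a partition E = E₁ ∪ E₂ ∪ E₃ with π(E_i) ∩ E_i = ∅ for all i and |E_i| ≥ ⌊|E|/3⌋ for all i. -/
open Finset

private def col (m k : ℕ) : ℕ := if m % 3 = 1 ∧ k = m - 1 then 1 else k % 3

private lemma col_lt (m k : ℕ) : col m k < 3 := by unfold col; split_ifs <;> omega

private lemma col_succ (m k : ℕ) (hk : k + 1 < m) : col m (k+1) ≠ col m k := by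
  unfold col; split_ifs <;> omega

private lemma col_wrap (m : ℕ) (hm : 2 ≤ m) : col m 0 ≠ col m (m-1) := by
  unfold col; split_ifs <;> omega

private lemma card_mod3 (m i : ℕ) (hi : i < 3) :
    ((range m).filter (fun k => k % 3 = i)).card = m / 3 + (if i < m % 3 then 1 else 0) := by
  induction m with
  | zero => simp
  | succ m ih =>
    rw [Finset.range_add_one, Finset.filter_insert]
    split_ifs with h1 h2 h2
    · rw [Finset.card_insert_of_notMem (by simp), ih]; split_ifs <;> omega
    · rw [Finset.card_insert_of_notMem (by simp), ih]; split_ifs <;> omega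
    · rw [ih]; split_ifs <;> omega
    · rw [ih]; split_ifs <;> omega

private lemma card_filter_col (m i : ℕ) (hm : 1 ≤ m) (hi : i < 3) :
    ((range m).filter (fun k => col m k = i)).card
      = (m-1) / 3 + (if i < (m-1) % 3 then 1 else 0)
        + (if col m (m-1) = i then 1 else 0) := by
  obtain ⟨s, rfl⟩ : ∃ s, m = s + 1 := ⟨m - 1, by omega⟩
  simp only [Nat.add_sub_cancel]
  have hfc : (range s).filter (fun k => col (s+1) k = i)
      = (range s).filter (fun k => k % 3 = i) := by
    apply Finset.filter_congr
    intro k hk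
    simp only [Finset.mem_range] at hk
    unfold col
    rw [if_neg (by omega)]
  rw [Finset.range_add_one, Finset.filter_insert, hfc]
  by_cases h : col (s+1) s = i
  · rw [if_pos h, if_pos h, Finset.card_insert_of_notMem (by simp), card_mod3 s i hi]
  · rw [if_neg h, if_neg h, card_mod3 s i hi, Nat.add_zero]

private lemma cnt_pair (m i j : ℕ) (hm : 2 ≤ m) (hi : i < 3) (hj : j < 3) :
    ((range m).filter (fun k => col m k = i)).card
      ≤ ((range m).filter (fun k => col m k = j)).card + 1 := by
  rw [card_filter_col m i (by omega) hi, card_filter_col m j (by omega) hj]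
  unfold col
  split_ifs <;> omega

private lemma glue {α : Type*} [DecidableEq α] (π : Equiv.Perm α)
    (C F C₁ C₂ C₃ F₁ F₂ F₃ : Finset α)
    (hCF : ∀ x ∈ C, x ∉ F)
    (hC : ∀ x, x ∈ C ↔ x ∈ C₁ ∨ x ∈ C₂ ∨ x ∈ C₃)
    (hF : ∀ x, x ∈ F ↔ x ∈ F₁ ∨ x ∈ F₂ ∨ x ∈ F₃)
    (hd12 : Disjoint C₁ C₂) (hd13 : Disjoint C₁ C₃) (hd23 : Disjoint C₂ C₃)
    (he12 : Disjoint F₁ F₂) (he13 : Disjoint F₁ F₃) (he23 : Disjoint F₂ F₃)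
    (hπC : ∀ x ∈ C, π x ∈ C) (hπF : ∀ x ∈ F, π x ∈ F)
    (hp1 : ∀ x ∈ C₁, π x ∉ C₁) (hp2 : ∀ x ∈ C₂, π x ∉ C₂) (hp3 : ∀ x ∈ C₃, π x ∉ C₃)
    (hq1 : ∀ x ∈ F₁, π x ∉ F₁) (hq2 : ∀ x ∈ F₂, π x ∉ F₂) (hq3 : ∀ x ∈ F₃, π x ∉ F₃) :
    ∃ E₁ E₂ E₃ : Finset α, C ∪ F = E₁ ∪ E₂ ∪ E₃ ∧
      Disjoint E₁ E₂ ∧ Disjoint E₁ E₃ ∧ Disjoint E₂ E₃ ∧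
      (∀ e ∈ E₁, π e ∉ E₁) ∧ (∀ e ∈ E₂, π e ∉ E₂) ∧ (∀ e ∈ E₃, π e ∉ E₃) ∧
      E₁.card = C₁.card + F₁.card ∧ E₂.card = C₂.card + F₂.card ∧
      E₃.card = C₃.card + F₃.card := by
  have sC1 : C₁ ⊆ C := fun x hx => (hC x).2 (Or.inl hx)
  have sC2 : C₂ ⊆ C := fun x hx => (hC x).2 (Or.inr (Or.inl hx))
  have sC3 : C₃ ⊆ C := fun x hx => (hC x).2 (Or.inr (Or.inr hx))
  have sF1 : F₁ ⊆ F := fun x hx => (hF x).2 (Or.inl hx)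
  have sF2 : F₂ ⊆ F := fun x hx => (hF x).2 (Or.inr (Or.inl hx))
  have sF3 : F₃ ⊆ F := fun x hx => (hF x).2 (Or.inr (Or.inr hx))
  have dCiFj : ∀ (A B : Finset α), A ⊆ C → B ⊆ F → Disjoint A B := by
    intro A B hA hB
    rw [Finset.disjoint_left]
    intro x hx hx'
    exact hCF x (hA hx) (hB hx')
  refine ⟨C₁ ∪ F₁, C₂ ∪ F₂, C₃ ∪ F₃, ?_, ?_, ?_, ?_, ?_, ?_, ?_, ?_, ?_, ?_⟩
  · ext x
    simp only [Finset.mem_union, hC, hF]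
    tauto
  · simp only [Finset.disjoint_union_left, Finset.disjoint_union_right]
    exact ⟨⟨hd12, (dCiFj _ _ sC2 sF1).symm⟩, ⟨dCiFj _ _ sC1 sF2, he12⟩⟩
  · simp only [Finset.disjoint_union_left, Finset.disjoint_union_right]
    exact ⟨⟨hd13, (dCiFj _ _ sC3 sF1).symm⟩, ⟨dCiFj _ _ sC1 sF3, he13⟩⟩
  · simp only [Finset.disjoint_union_left, Finset.disjoint_union_right]
    exact ⟨⟨hd23, (dCiFj _ _ sC3 sF2).symm⟩, ⟨dCiFj _ _ sC2 sF3, he23⟩⟩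
  · intro e he
    rcases Finset.mem_union.1 he with h | h
    · have h1 : π e ∈ C := hπC e (sC1 h)
      simp only [Finset.mem_union, not_or]
      exact ⟨hp1 e h, fun hf => hCF _ h1 (sF1 hf)⟩
    · have h1 : π e ∈ F := hπF e (sF1 h)
      simp only [Finset.mem_union, not_or]
      exact ⟨fun hf => hCF _ (sC1 hf) h1, hq1 e h⟩
  · intro e he
    rcases Finset.mem_union.1 he with h | h
    · have h1 : π e ∈ C := hπC e (sC2 h)
      simp only [Finset.mem_union, not_or]
      exact ⟨hp2 e h, fun hf => hCF _ h1 (sF2 hf)⟩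
    · have h1 : π e ∈ F := hπF e (sF2 h)
      simp only [Finset.mem_union, not_or]
      exact ⟨fun hf => hCF _ (sC2 hf) h1, hq2 e h⟩
  · intro e he
    rcases Finset.mem_union.1 he with h | h
    · have h1 : π e ∈ C := hπC e (sC3 h)
      simp only [Finset.mem_union, not_or]
      exact ⟨hp3 e h, fun hf => hCF _ h1 (sF3 hf)⟩
    · have h1 : π e ∈ F := hπF e (sF3 h)
      simp only [Finset.mem_union, not_or]
      exact ⟨fun hf => hCF _ (sC3 hf) h1, hq3 e h⟩
  · exact Finset.card_union_of_disjoint (dCiFj _ _ sC1 sF1)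
  · exact Finset.card_union_of_disjoint (dCiFj _ _ sC2 sF2)
  · exact Finset.card_union_of_disjoint (dCiFj _ _ sC3 sF3)

private lemma match3' (a b c x y z : ℕ)
    (h1 : a ≤ b + 1) (h2 : b ≤ a + 1) (h3 : a ≤ c + 1) (h4 : c ≤ a + 1)
    (h5 : b ≤ c + 1) (h6 : c ≤ b + 1)
    (g1 : x ≤ y + 1) (g2 : y ≤ x + 1) (g3 : x ≤ z + 1) (g4 : z ≤ x + 1)
    (g5 : y ≤ z + 1) (g6 : z ≤ y + 1) :
    (a+x ≤ b+y+1 ∧ b+y ≤ a+x+1 ∧ a+x ≤ c+z+1 ∧ c+z ≤ a+x+1 ∧ b+y ≤ c+z+1 ∧ c+z ≤ b+y+1) ∨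
    (a+x ≤ c+y+1 ∧ c+y ≤ a+x+1 ∧ a+x ≤ b+z+1 ∧ b+z ≤ a+x+1 ∧ c+y ≤ b+z+1 ∧ b+z ≤ c+y+1) ∨
    (b+x ≤ a+y+1 ∧ a+y ≤ b+x+1 ∧ b+x ≤ c+z+1 ∧ c+z ≤ b+x+1 ∧ a+y ≤ c+z+1 ∧ c+z ≤ a+y+1) ∨
    (b+x ≤ c+y+1 ∧ c+y ≤ b+x+1 ∧ b+x ≤ a+z+1 ∧ a+z ≤ b+x+1 ∧ c+y ≤ a+z+1 ∧ a+z ≤ c+y+1) ∨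
    (c+x ≤ a+y+1 ∧ a+y ≤ c+x+1 ∧ c+x ≤ b+z+1 ∧ b+z ≤ c+x+1 ∧ a+y ≤ b+z+1 ∧ b+z ≤ a+y+1) ∨
    (c+x ≤ b+y+1 ∧ b+y ≤ c+x+1 ∧ c+x ≤ a+z+1 ∧ a+z ≤ c+x+1 ∧ b+y ≤ a+z+1 ∧ a+z ≤ b+y+1) := by
  omega

set_option maxHeartbeats 2000000 in
private lemma aux {α : Type*} [DecidableEq α] (π : Equiv.Perm α) :
    ∀ n (E : Finset α), E.card ≤ n → (∀ e ∈ E, π e ∈ E) → (∀ e ∈ E, π e ≠ e) →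
    ∃ E₁ E₂ E₃ : Finset α, E = E₁ ∪ E₂ ∪ E₃ ∧
      Disjoint E₁ E₂ ∧ Disjoint E₁ E₃ ∧ Disjoint E₂ E₃ ∧
      (∀ e ∈ E₁, π e ∉ E₁) ∧ (∀ e ∈ E₂, π e ∉ E₂) ∧ (∀ e ∈ E₃, π e ∉ E₃) ∧
      E₁.card ≤ E₂.card + 1 ∧ E₂.card ≤ E₁.card + 1 ∧ E₁.card ≤ E₃.card + 1 ∧
      E₃.card ≤ E₁.card + 1 ∧ E₂.card ≤ E₃.card + 1 ∧ E₃.card ≤ E₂.card + 1 := by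
  intro n
  induction n with
  | zero =>
    intro E hE _ _
    have : E = ∅ := Finset.card_eq_zero.1 (Nat.le_zero.1 hE)
    subst this
    exact ⟨∅, ∅, ∅, by simp, by simp, by simp, by simp, by simp, by simp, by simp,
      by simp, by simp, by simp, by simp, by simp, by simp⟩
  | succ n ih =>
    intro E hEcard hmaps hfix
    rcases E.eq_empty_or_nonempty with rfl | ⟨e, he⟩
    · exact ih ∅ (by simp) (by simp) (by simp)
    set g : ℕ → α := fun k => π^[k] e with hg
    have hiter : ∀ k, g k ∈ E := by
      intro k
      induction k with
      | zero => exact he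
      | succ k ihk =>
        show π^[k+1] e ∈ E
        rw [Function.iterate_succ_apply']
        exact hmaps _ ihk
    have key : ∀ i j, i < j → g i = g j → g (j - i) = e := by
      intro i j hij hEq
      have h1 : π^[i] (π^[j-i] e) = π^[i] e := by
        rw [← Function.iterate_add_apply]
        have : i + (j - i) = j := by omega
        rw [this]
        exact hEq.symm
      exact π.injective.iterate i h1
    have hper : ∃ k, 0 < k ∧ π^[k] e = e := by
      obtain ⟨i, hi, j, hj, hij, hgeq⟩ :=
        Finset.exists_ne_map_eq_of_card_lt_of_maps_to
          (s := range (E.card + 1)) (t := E) (by rw [Finset.card_range]; omega)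
          (fun k _ => hiter k)
      rcases Nat.lt_or_ge i j with h | h
      · exact ⟨j - i, by omega, key i j h hgeq⟩
      · exact ⟨i - j, by omega, key j i (by omega) hgeq.symm⟩
    set m := Nat.find hper with hm
    have hmspec : 0 < m ∧ π^[m] e = e := Nat.find_spec hper
    have hmin : ∀ k, k < m → ¬(0 < k ∧ π^[k] e = e) := fun k hk => Nat.find_min hper hk
    have hm2 : 2 ≤ m := by
      rcases Nat.lt_or_ge m 2 with h | h
      · exfalso
        interval_cases m
        · exact absurd hmspec.2 (by simpa using hmspec.1.ne')
        · exact hfix e he (by simpa using hmspec.2)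
      · exact h
    have hinj : ∀ i j, i < m → j < m → g i = g j → i = j := by
      intro i j hi hj hEq
      rcases lt_trichotomy i j with h | h | h
      · exact (hmin (j - i) (by omega) ⟨by omega, key i j h hEq⟩).elim
      · exact h
      · exact (hmin (i - j) (by omega) ⟨by omega, key j i h hEq.symm⟩).elim
    set C : Finset α := (range m).image g with hCdef
    have hmemC : ∀ k, k < m → g k ∈ C := by
      intro k hk
      rw [hCdef]
      exact Finset.mem_image.2 ⟨k, Finset.mem_range.2 hk, rfl⟩
    have hCE : C ⊆ E := by
      intro x hx
      obtain ⟨k, _, rfl⟩ := Finset.mem_image.1 hx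
      exact hiter k
    set F : Finset α := E \ C with hFdef
    have hCF : ∀ x ∈ C, x ∉ F := fun x hx hxf => (Finset.mem_sdiff.1 hxf).2 hx
    have hEC : C ∪ F = E := Finset.union_sdiff_of_subset hCE
    have hgm : g m = g 0 := by
      show π^[m] e = π^[0] e
      rw [Function.iterate_zero_apply]
      exact hmspec.2
    have hstep : ∀ k, π (g k) = g (k + 1) := fun k =>
      (Function.iterate_succ_apply' π k e).symm
    have hπC : ∀ x ∈ C, π x ∈ C := by
      intro x hx
      obtain ⟨k, hk, rfl⟩ := Finset.mem_image.1 hx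
      rw [Finset.mem_range] at hk
      rw [hstep k]
      by_cases h : k + 1 = m
      · rw [h, hgm]
        exact hmemC 0 (by omega)
      · exact hmemC (k + 1) (by omega)
    have hπF : ∀ x ∈ F, π x ∈ F := by
      intro x hx
      rw [Finset.mem_sdiff] at hx
      refine Finset.mem_sdiff.2 ⟨hmaps x hx.1, fun hc => hx.2 ?_⟩
      obtain ⟨k, hk, hkx⟩ := Finset.mem_image.1 hc
      rw [Finset.mem_range] at hk
      rcases k with _ | k'
      · have h1 : π (g (m - 1)) = π x := by
          rw [hstep (m - 1), show m - 1 + 1 = m by omega, hgm, hkx]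
        have h2 : x = g (m - 1) := (π.injective h1).symm
        rw [h2]
        exact hmemC (m - 1) (by omega)
      · have h1 : π (g k') = π x := by rw [hstep k', hkx]
        have h2 : x = g k' := (π.injective h1).symm
        rw [h2]
        exact hmemC k' (by omega)
    have hCcard : C.card = m := by
      rw [hCdef, Finset.card_image_of_injOn, Finset.card_range]
      intro i hi j hj hEq
      simp only [Finset.coe_range, Set.mem_Iio] at hi hj
      exact hinj i j hi hj hEq
    have hFn : F.card ≤ n := by
      have h1 : F.card = E.card - C.card := Finset.card_sdiff_of_subset hCE
      have h2 : C.card ≤ E.card := Finset.card_le_card hCE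
      omega
    obtain ⟨F₁, F₂, F₃, hFeq, he12, he13, he23, hq1, hq2, hq3,
      k1, k2, k3, k4, k5, k6⟩ := ih F hFn hπF (fun x hx => hfix x (Finset.mem_sdiff.1 hx).1)
    set Ci : ℕ → Finset α := fun i => ((range m).filter (fun k => col m k = i)).image g
      with hCi
    have hCp : ∀ x, x ∈ C ↔ x ∈ Ci 0 ∨ x ∈ Ci 1 ∨ x ∈ Ci 2 := by
      intro x
      simp only [hCi, hCdef, Finset.mem_image, Finset.mem_filter]
      constructor
      · rintro ⟨k, hk, rfl⟩
        have h3 := col_lt m k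
        have : col m k = 0 ∨ col m k = 1 ∨ col m k = 2 := by omega
        rcases this with h | h | h
        · exact Or.inl ⟨k, ⟨hk, h⟩, rfl⟩
        · exact Or.inr (Or.inl ⟨k, ⟨hk, h⟩, rfl⟩)
        · exact Or.inr (Or.inr ⟨k, ⟨hk, h⟩, rfl⟩)
      · rintro (⟨k, ⟨hk, _⟩, rfl⟩ | ⟨k, ⟨hk, _⟩, rfl⟩ | ⟨k, ⟨hk, _⟩, rfl⟩) <;>
          exact ⟨k, hk, rfl⟩
    have hCdis : ∀ i j, i ≠ j → Disjoint (Ci i) (Ci j) := by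
      intro i j hij
      rw [Finset.disjoint_left]
      intro x hx hx'
      simp only [hCi, Finset.mem_image, Finset.mem_filter, Finset.mem_range] at hx hx'
      obtain ⟨k, ⟨hk, hki⟩, rfl⟩ := hx
      obtain ⟨k', ⟨hk', hkj⟩, hgk⟩ := hx'
      have : k' = k := hinj k' k hk' hk hgk
      subst this
      exact hij (hki.symm.trans hkj)
    have hCprop : ∀ i, ∀ x ∈ Ci i, π x ∉ Ci i := by
      intro i x hx hx'
      simp only [hCi, Finset.mem_image, Finset.mem_filter, Finset.mem_range] at hx hx'
      obtain ⟨k, ⟨hk, hki⟩, rfl⟩ := hx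
      obtain ⟨k', ⟨hk', hki'⟩, hgk⟩ := hx'
      rw [hstep k] at hgk
      by_cases h : k + 1 = m
      · rw [h, hgm] at hgk
        have hk0 : k' = 0 := hinj k' 0 hk' (by omega) hgk
        subst hk0
        have hkm : k = m - 1 := by omega
        subst hkm
        exact col_wrap m hm2 (hki'.trans hki.symm)
      · have : k' = k + 1 := hinj k' (k + 1) hk' (by omega) hgk
        subst this
        exact col_succ m k (by omega) (hki'.trans hki.symm)
    have hCicard : ∀ i, (Ci i).card = ((range m).filter (fun k => col m k = i)).card := by
      intro i
      rw [hCi]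
      apply Finset.card_image_of_injOn
      intro a ha b hb hEq
      simp only [Finset.coe_filter, Set.mem_setOf_eq, Finset.mem_range] at ha hb
      exact hinj a b ha.1 hb.1 hEq
    have hab : ∀ i j, i < 3 → j < 3 → (Ci i).card ≤ (Ci j).card + 1 := by
      intro i j hi hj
      rw [hCicard i, hCicard j]
      exact cnt_pair m i j hm2 hi hj
    have main : ∀ i j k : ℕ, i ≠ j → i ≠ k → j ≠ k →
        (∀ x, x ∈ C ↔ x ∈ Ci i ∨ x ∈ Ci j ∨ x ∈ Ci k) →
        ((Ci i).card + F₁.card ≤ (Ci j).card + F₂.card + 1 ∧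
         (Ci j).card + F₂.card ≤ (Ci i).card + F₁.card + 1 ∧
         (Ci i).card + F₁.card ≤ (Ci k).card + F₃.card + 1 ∧
         (Ci k).card + F₃.card ≤ (Ci i).card + F₁.card + 1 ∧
         (Ci j).card + F₂.card ≤ (Ci k).card + F₃.card + 1 ∧
         (Ci k).card + F₃.card ≤ (Ci j).card + F₂.card + 1) →
        ∃ E₁ E₂ E₃ : Finset α, E = E₁ ∪ E₂ ∪ E₃ ∧
          Disjoint E₁ E₂ ∧ Disjoint E₁ E₃ ∧ Disjoint E₂ E₃ ∧
          (∀ e ∈ E₁, π e ∉ E₁) ∧ (∀ e ∈ E₂, π e ∉ E₂) ∧ (∀ e ∈ E₃, π e ∉ E₃) ∧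
          E₁.card ≤ E₂.card + 1 ∧ E₂.card ≤ E₁.card + 1 ∧ E₁.card ≤ E₃.card + 1 ∧
          E₃.card ≤ E₁.card + 1 ∧ E₂.card ≤ E₃.card + 1 ∧ E₃.card ≤ E₂.card + 1 := by
      intro i j k hij hik hjk hCiff hcond
      obtain ⟨E₁, E₂, E₃, hu, hd1, hd2, hd3, hp1, hp2, hp3, hc1, hc2, hc3⟩ :=
        glue π C F (Ci i) (Ci j) (Ci k) F₁ F₂ F₃ hCF hCiff
          (fun x => by rw [hFeq]; simp only [Finset.mem_union, or_assoc])
          (hCdis i j hij) (hCdis i k hik) (hCdis j k hjk) he12 he13 he23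
          hπC hπF (hCprop i) (hCprop j) (hCprop k) hq1 hq2 hq3
      exact ⟨E₁, E₂, E₃, by rw [← hEC, hu], hd1, hd2, hd3, hp1, hp2, hp3,
        by omega, by omega, by omega, by omega, by omega, by omega⟩
    have hmatch := match3' (Ci 0).card (Ci 1).card (Ci 2).card F₁.card F₂.card F₃.card
      (hab 0 1 (by decide) (by decide)) (hab 1 0 (by decide) (by decide))
      (hab 0 2 (by decide) (by decide)) (hab 2 0 (by decide) (by decide))
      (hab 1 2 (by decide) (by decide)) (hab 2 1 (by decide) (by decide))
      k1 k2 k3 k4 k5 k6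
    rcases hmatch with h | h | h | h | h | h
    · exact main 0 1 2 (by decide) (by decide) (by decide)
        (fun x => by rw [hCp x]) h
    · exact main 0 2 1 (by decide) (by decide) (by decide)
        (fun x => by rw [hCp x]; tauto) h
    · exact main 1 0 2 (by decide) (by decide) (by decide)
        (fun x => by rw [hCp x]; tauto) h
    · exact main 1 2 0 (by decide) (by decide) (by decide)
        (fun x => by rw [hCp x]; tauto) h
    · exact main 2 0 1 (by decide) (by decide) (by decide)
        (fun x => by rw [hCp x]; tauto) h
    · exact main 2 1 0 (by decide) (by decide) (by decide)
        (fun x => by rw [hCp x]; tauto) h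

theorem balanced_three_partition_no_fixed {α : Type*} [DecidableEq α]
    (π : Equiv.Perm α) (E : Finset α)
    (hmaps : ∀ e ∈ E, π e ∈ E) (hfix : ∀ e ∈ E, π e ≠ e) :
    ∃ E₁ E₂ E₃ : Finset α,
      E = E₁ ∪ E₂ ∪ E₃ ∧
      Disjoint E₁ E₂ ∧ Disjoint E₁ E₃ ∧ Disjoint E₂ E₃ ∧
      (∀ e ∈ E₁, π e ∉ E₁) ∧ (∀ e ∈ E₂, π e ∉ E₂) ∧ (∀ e ∈ E₃, π e ∉ E₃) ∧
      E.card / 3 ≤ E₁.card ∧ E.card / 3 ≤ E₂.card ∧ E.card / 3 ≤ E₃.card := by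
  obtain ⟨E₁, E₂, E₃, hu, hd1, hd2, hd3, hp1, hp2, hp3, c1, c2, c3, c4, c5, c6⟩ :=
    aux π E.card E le_rfl hmaps hfix
  have hcard : E.card = E₁.card + E₂.card + E₃.card := by
    rw [hu, Finset.card_union_of_disjoint, Finset.card_union_of_disjoint hd1]
    rw [Finset.disjoint_union_left]
    exact ⟨hd2, hd3⟩
  exact ⟨E₁, E₂, E₃, hu, hd1, hd2, hd3, hp1, hp2, hp3, by omega, by omega, by omega⟩
end

section
/- Let X₁, …, X_m be independent random variables, each taking values in {-1, 0, 1}, where X_j has P(X_j = 1) = a_j and P(X_j = -1) = b_j with b_j > a_j > 0 for all j. Let A = ∑_j a_j and B = ∑_j b_j. Then P(∑_j X_j ≥ 0) ≤ exp(-(√B - √A)²). -/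
open MeasureTheory ProbabilityTheory

section Aux
variable {Ω : Type*} [MeasurableSpace Ω] {μ : Measure Ω} [IsProbabilityMeasure μ]

lemma aux_integrable {f : Ω → ℝ} (hf : Measurable f) (C : ℝ) (h : ∀ ω, |f ω| ≤ C) :
    Integrable f μ :=
  (integrable_const C).mono' hf.aestronglyMeasurable (Filter.Eventually.of_forall h)

end Aux

-- single-variable mgf computation
lemma mgf_three_valued {Ω : Type*} [MeasurableSpace Ω] (μ : Measure Ω)
    [IsProbabilityMeasure μ] (Y : Ω → ℝ) (hY : Measurable Y)
    (hval : ∀ ω, Y ω = -1 ∨ Y ω = 0 ∨ Y ω = 1) (t : ℝ) :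
    mgf Y μ t = 1 + (μ {ω | Y ω = 1}).toReal * (Real.exp t - 1)
        + (μ {ω | Y ω = -1}).toReal * (Real.exp (-t) - 1) := by
  have hA : MeasurableSet {ω | Y ω = 1} := hY (measurableSet_singleton 1)
  have hB : MeasurableSet {ω | Y ω = -1} := hY (measurableSet_singleton (-1))
  have hC : MeasurableSet {ω | Y ω = 0} := hY (measurableSet_singleton 0)
  -- pointwise identity
  have hpt : ∀ ω, Real.exp (t * Y ω)
      = Set.indicator {ω | Y ω = 1} (fun _ => Real.exp t) ω
        + Set.indicator {ω | Y ω = -1} (fun _ => Real.exp (-t)) ω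
        + Set.indicator {ω | Y ω = 0} (fun _ => (1:ℝ)) ω := by
    intro ω
    rcases hval ω with h | h | h <;>
      simp [Set.indicator, h, Set.mem_setOf_eq] <;> norm_num
  -- measure of {Y = 0}
  have hsum : (μ {ω | Y ω = 1}).toReal + (μ {ω | Y ω = -1}).toReal
      + (μ {ω | Y ω = 0}).toReal = 1 := by
    have hdisj1 : Disjoint {ω | Y ω = 1} {ω | Y ω = -1} := by
      rw [Set.disjoint_left]; intro ω h1 h2
      simp only [Set.mem_setOf_eq] at h1 h2; rw [h1] at h2; norm_num at h2
    have hdisj2 : Disjoint ({ω | Y ω = 1} ∪ {ω | Y ω = -1}) {ω | Y ω = 0} := by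
      rw [Set.disjoint_left]; intro ω h1 h2
      simp only [Set.mem_setOf_eq] at h2
      rcases h1 with h1 | h1 <;> simp only [Set.mem_setOf_eq] at h1 <;>
        rw [h1] at h2 <;> norm_num at h2
    have hunion : ({ω | Y ω = 1} ∪ {ω | Y ω = -1}) ∪ {ω | Y ω = 0} = Set.univ := by
      ext ω; simp only [Set.mem_union, Set.mem_setOf_eq, Set.mem_univ, iff_true]
      rcases hval ω with h | h | h <;> tauto
    have := measure_union (μ := μ) hdisj2 hC
    rw [hunion, measure_union hdisj1 hB, measure_univ] at this
    have h1 : μ {ω | Y ω = 1} ≠ ⊤ := measure_ne_top _ _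
    have h2 : μ {ω | Y ω = -1} ≠ ⊤ := measure_ne_top _ _
    have h3 : μ {ω | Y ω = 0} ≠ ⊤ := measure_ne_top _ _
    have := congrArg ENNReal.toReal this.symm
    rwa [ENNReal.toReal_add (by finiteness) h3, ENNReal.toReal_add h1 h2,
      ENNReal.toReal_one] at this
  have hint1 : Integrable (Set.indicator {ω | Y ω = 1} (fun _ => Real.exp t)) μ :=
    (integrable_const _).indicator hA
  have hint2 : Integrable (Set.indicator {ω | Y ω = -1} (fun _ => Real.exp (-t))) μ :=
    (integrable_const _).indicator hB
  have hint3 : Integrable (Set.indicator {ω | Y ω = 0} (fun _ => (1:ℝ))) μ :=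
    (integrable_const _).indicator hC
  rw [mgf]
  calc μ[fun ω => Real.exp (t * Y ω)]
      = ∫ ω, (Set.indicator {ω | Y ω = 1} (fun _ => Real.exp t) ω
        + Set.indicator {ω | Y ω = -1} (fun _ => Real.exp (-t)) ω
        + Set.indicator {ω | Y ω = 0} (fun _ => (1:ℝ)) ω) ∂μ := by
        exact integral_congr_ae (Filter.Eventually.of_forall hpt)
    _ = (μ {ω | Y ω = 1}).toReal * Real.exp t
        + (μ {ω | Y ω = -1}).toReal * Real.exp (-t)
        + (μ {ω | Y ω = 0}).toReal * 1 := by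
        have hi12 : Integrable (fun ω => Set.indicator {ω | Y ω = 1} (fun _ => Real.exp t) ω
            + Set.indicator {ω | Y ω = -1} (fun _ => Real.exp (-t)) ω) μ := hint1.add hint2
        rw [integral_add hi12 hint3, integral_add hint1 hint2,
          integral_indicator_const _ hA, integral_indicator_const _ hB,
          integral_indicator_const _ hC]
        simp [smul_eq_mul, Measure.real]
    _ = 1 + (μ {ω | Y ω = 1}).toReal * (Real.exp t - 1)
        + (μ {ω | Y ω = -1}).toReal * (Real.exp (-t) - 1) := by
        have : (μ {ω | Y ω = 0}).toReal
            = 1 - (μ {ω | Y ω = 1}).toReal - (μ {ω | Y ω = -1}).toReal := by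
          linarith
        rw [this]; ring

open MeasureTheory ProbabilityTheory in
theorem chernoff_bound {Ω : Type*} [MeasurableSpace Ω] (μ : Measure Ω)
    [IsProbabilityMeasure μ] (m : ℕ) (X : Fin m → Ω → ℝ)
    (hmeas : ∀ j, Measurable (X j))
    (hind : iIndepFun X μ)
    (hval : ∀ j ω, X j ω = -1 ∨ X j ω = 0 ∨ X j ω = 1)
    (a b : Fin m → ℝ)
    (ha : ∀ j, (μ {ω | X j ω = 1}).toReal = a j)
    (hb : ∀ j, (μ {ω | X j ω = -1}).toReal = b j)
    (hpos : ∀ j, 0 < a j) (hlt : ∀ j, a j < b j) :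
    (μ {ω | 0 ≤ ∑ j, X j ω}).toReal
      ≤ Real.exp (-(Real.sqrt (∑ j, b j) - Real.sqrt (∑ j, a j))^2) := by
  rcases Nat.eq_zero_or_pos m with hm | hm
  · subst hm
    simp only [Finset.univ_eq_empty, Finset.sum_empty, le_refl, Set.setOf_true,
      measure_univ, ENNReal.toReal_one, Real.sqrt_zero, sub_zero, ne_eq]
    norm_num
  set A := ∑ j, a j with hA
  set B := ∑ j, b j with hB
  have hApos : 0 < A := Finset.sum_pos (fun j _ => hpos j) (by simp [Finset.univ_nonempty_iff, ← Fin.pos_iff_nonempty, hm])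
  have hAB : A < B := Finset.sum_lt_sum_of_nonempty (by simp [Finset.univ_nonempty_iff, ← Fin.pos_iff_nonempty, hm]) (fun j _ => hlt j)
  have hBpos : 0 < B := hApos.trans hAB
  set t := Real.log (Real.sqrt (B / A)) with ht
  have hBA1 : 1 < B / A := (one_lt_div hApos).mpr hAB
  have hsq1 : 1 < Real.sqrt (B / A) := by
    rw [show (1:ℝ) = Real.sqrt 1 by simp]
    exact Real.sqrt_lt_sqrt (by norm_num) hBA1
  have htpos : 0 < t := Real.log_pos hsq1
  have hexp_t : Real.exp t = Real.sqrt (B / A) := Real.exp_log (by positivity)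
  have hexp_nt : Real.exp (-t) = Real.sqrt (A / B) := by
    rw [Real.exp_neg, hexp_t, ← Real.sqrt_inv, inv_div]
  -- mgf of each X j
  have hmgf : ∀ j, mgf (X j) μ t
      = 1 + a j * (Real.exp t - 1) + b j * (Real.exp (-t) - 1) := by
    intro j
    rw [mgf_three_valued μ (X j) (hmeas j) (hval j) t, ha j, hb j]
  -- Markov step
  have hSmeas : Measurable (∑ j, X j) := by
    have : (∑ j, X j) = fun ω => ∑ j, X j ω := by
      ext ω; simp [Finset.sum_apply]
    rw [this]
    exact Finset.measurable_sum _ (fun j _ => hmeas j)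
  have hint : Integrable (fun ω => Real.exp (t * (∑ j, X j) ω)) μ := by
    apply aux_integrable (by exact (hSmeas.const_mul t).exp)
      (C := Real.exp (|t| * m))
    intro ω
    rw [abs_of_pos (Real.exp_pos _), Real.exp_le_exp]
    calc t * (∑ j, X j) ω ≤ |t * (∑ j, X j) ω| := le_abs_self _
      _ = |t| * |(∑ j, X j) ω| := abs_mul _ _
      _ ≤ |t| * m := by
          apply mul_le_mul_of_nonneg_left _ (abs_nonneg t)
          simp only [Finset.sum_apply]
          calc |∑ j, X j ω| ≤ ∑ j, |X j ω| := Finset.abs_sum_le_sum_abs _ _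
            _ ≤ ∑ _j : Fin m, (1:ℝ) := Finset.sum_le_sum (fun j _ => by
                rcases hval j ω with h | h | h <;> rw [h] <;> norm_num)
            _ = m := by simp
  have hmarkov := measure_ge_le_exp_mul_mgf (X := ∑ j, X j) (μ := μ) 0 htpos.le hint
  rw [mul_zero, Real.exp_zero, one_mul] at hmarkov
  have hset : {ω | 0 ≤ ∑ j, X j ω} = {ω | 0 ≤ (∑ j, X j) ω} := by
    simp [Finset.sum_apply]
  rw [hset]
  refine hmarkov.trans ?_
  rw [hind.mgf_sum hmeas]
  -- bound the product
  have hprod : ∏ j, mgf (X j) μ t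
      ≤ ∏ j, Real.exp (a j * (Real.exp t - 1) + b j * (Real.exp (-t) - 1)) := by
    apply Finset.prod_le_prod (fun j _ => mgf_nonneg)
    intro j _
    rw [hmgf j, add_assoc]
    calc 1 + (a j * (Real.exp t - 1) + b j * (Real.exp (-t) - 1))
        = (a j * (Real.exp t - 1) + b j * (Real.exp (-t) - 1)) + 1 := by ring
      _ ≤ Real.exp (a j * (Real.exp t - 1) + b j * (Real.exp (-t) - 1)) :=
          Real.add_one_le_exp _
  refine hprod.trans ?_
  rw [← Real.exp_sum, Real.exp_le_exp]
  have hsum : ∑ j, (a j * (Real.exp t - 1) + b j * (Real.exp (-t) - 1))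
      = A * (Real.exp t - 1) + B * (Real.exp (-t) - 1) := by
    rw [Finset.sum_add_distrib, ← Finset.sum_mul, ← Finset.sum_mul]
  rw [hsum, hexp_t, hexp_nt]
  -- algebra
  have hsA : Real.sqrt A ^ 2 = A := Real.sq_sqrt hApos.le
  have hsB : Real.sqrt B ^ 2 = B := Real.sq_sqrt hBpos.le
  have mA : Real.sqrt A * Real.sqrt A = A := Real.mul_self_sqrt hApos.le
  have mB : Real.sqrt B * Real.sqrt B = B := Real.mul_self_sqrt hBpos.le
  have sApos : 0 < Real.sqrt A := Real.sqrt_pos.mpr hApos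
  have sBpos : 0 < Real.sqrt B := Real.sqrt_pos.mpr hBpos
  have e1 : Real.sqrt (B / A) = Real.sqrt B / Real.sqrt A := Real.sqrt_div hBpos.le A
  have e2 : Real.sqrt (A / B) = Real.sqrt A / Real.sqrt B := Real.sqrt_div hApos.le B
  have h1 : A * (Real.sqrt B / Real.sqrt A) = Real.sqrt A * Real.sqrt B := by
    rw [mul_div_assoc', div_eq_iff (ne_of_gt sApos)]; linear_combination (-Real.sqrt B) * mA
  have h2 : B * (Real.sqrt A / Real.sqrt B) = Real.sqrt A * Real.sqrt B := by
    rw [mul_div_assoc', div_eq_iff (ne_of_gt sBpos)]; linear_combination (-Real.sqrt A) * mB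
  have hsq : (Real.sqrt B - Real.sqrt A)^2 = B + A - 2*(Real.sqrt A * Real.sqrt B) := by
    rw [sub_sq, hsA, hsB]; ring
  apply le_of_eq
  calc A * (Real.sqrt (B/A) - 1) + B * (Real.sqrt (A/B) - 1)
      = A * (Real.sqrt B / Real.sqrt A) + B * (Real.sqrt A / Real.sqrt B) - A - B := by
        rw [e1, e2]; ring
    _ = 2*(Real.sqrt A * Real.sqrt B) - A - B := by rw [h1, h2]; ring
    _ = -(Real.sqrt B - Real.sqrt A)^2 := by rw [hsq]; ring
end

section
/- Let π be a permutation of a set V partitioned into communities C₁ (size n₁) and C₂ (size n₂) that preserves each community, with exactly k₁ non-fixed points in C₁ and k₂ in C₂. Let E_intra^π be the set of unordered intra-community pairs {a,b} (both in C₁ or both in C₂, a ≠ b) with π({a,b}) ≠ {a,b}, and let E_tr^π be the set of transposition pairs of π. Then |E_intra^π| = ∑_{i=1,2} [C(k_i, 2) + k_i(n_i - k_i)] - |E_tr^π|. -/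
private lemma choose_two_add (a b : ℕ) :
    (a + b).choose 2 = a.choose 2 + a * b + b.choose 2 := by
  induction b with
  | zero => simp
  | succ n ih =>
    have h : (a + (n + 1)).choose 2 = (a + n).choose 2 + (a + n) := by
      have h1 : a + (n + 1) = (a + n) + 1 := by omega
      rw [h1, Nat.choose_succ_succ, Nat.choose_one_right]
      norm_num
      omega
    have h2 : (n + 1).choose 2 = n.choose 2 + n := by
      rw [Nat.choose_succ_succ, Nat.choose_one_right]
      norm_num
      omega
    have hm : a * (n + 1) = a * n + a := by ring
    omega

private lemma card_pairs {V : Type*} [Fintype V] [DecidableEq V] (s : Finset V) :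
    (Finset.univ.filter (fun e : Sym2 V => ¬ e.IsDiag ∧ ∀ a ∈ e, a ∈ s)).card
      = s.card.choose 2 := by
  rw [← Sym2.card_image_offDiag]
  congr 1
  ext e
  induction e using Sym2.inductionOn with
  | hf a b =>
    simp only [Finset.mem_filter, Finset.mem_univ, true_and, Finset.mem_image,
      Finset.mem_offDiag, Sym2.mk_isDiag_iff, Sym2.mem_iff]
    constructor
    · rintro ⟨hne, hmem⟩
      exact ⟨(a, b), ⟨hmem a (Or.inl rfl), hmem b (Or.inr rfl), hne⟩, rfl⟩
    · rintro ⟨⟨x, y⟩, ⟨hx, hy, hxy⟩, heq⟩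
      rw [Function.uncurry_apply_pair, Sym2.eq_iff] at heq
      rcases heq with ⟨rfl, rfl⟩ | ⟨rfl, rfl⟩
      · exact ⟨hxy, fun c hc => by rcases hc with rfl | rfl <;> assumption⟩
      · exact ⟨fun h => hxy h.symm, fun c hc => by rcases hc with rfl | rfl <;> assumption⟩

private lemma card_moved_pairs {V : Type*} [Fintype V] [DecidableEq V]
    (π : Equiv.Perm V) (C : Finset V) :
    (Finset.univ.filter (fun e : Sym2 V =>
        ¬ e.IsDiag ∧ (∀ a ∈ e, a ∈ C) ∧ ∃ a ∈ e, π a ≠ a)).card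
      = C.card.choose 2 - (C.card - (C.filter (fun v => π v ≠ v)).card).choose 2 := by
  classical
  set F : Finset V := C.filter (fun v => π v = v) with hF
  have hFadd : F.card + (C.filter (fun v => π v ≠ v)).card = C.card := by
    simp only [hF, ne_eq]
    exact Finset.card_filter_add_card_filter_not _
  have hFcard : F.card = C.card - (C.filter (fun v => π v ≠ v)).card := by omega
  have hsub : (Finset.univ.filter (fun e : Sym2 V => ¬ e.IsDiag ∧ ∀ a ∈ e, a ∈ F))
      ⊆ (Finset.univ.filter (fun e : Sym2 V => ¬ e.IsDiag ∧ ∀ a ∈ e, a ∈ C)) := by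
    intro e he
    simp only [Finset.mem_filter, Finset.mem_univ, true_and] at *
    exact ⟨he.1, fun a ha => (Finset.mem_filter.mp (he.2 a ha)).1⟩
  have hset : Finset.univ.filter (fun e : Sym2 V =>
        ¬ e.IsDiag ∧ (∀ a ∈ e, a ∈ C) ∧ ∃ a ∈ e, π a ≠ a)
      = (Finset.univ.filter (fun e : Sym2 V => ¬ e.IsDiag ∧ ∀ a ∈ e, a ∈ C))
        \ (Finset.univ.filter (fun e : Sym2 V => ¬ e.IsDiag ∧ ∀ a ∈ e, a ∈ F)) := by
    ext e
    simp only [Finset.mem_filter, Finset.mem_univ, true_and, Finset.mem_sdiff, hF]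
    constructor
    · rintro ⟨hd, hC, a, ha, hmove⟩
      exact ⟨⟨hd, hC⟩, fun h => hmove (h.2 a ha).2⟩
    · rintro ⟨⟨hd, hC⟩, h⟩
      refine ⟨hd, hC, ?_⟩
      by_contra hall
      push_neg at hall
      exact h ⟨hd, fun a ha => ⟨hC a ha, hall a ha⟩⟩
  rw [hset, Finset.card_sdiff_of_subset hsub, card_pairs, card_pairs, hFcard]

theorem intra_pairs_count {V : Type*} [Fintype V] [DecidableEq V]
    (π : Equiv.Perm V) (C₁ C₂ : Finset V)
    (hpart : C₁ ∪ C₂ = Finset.univ) (hdisj : Disjoint C₁ C₂)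
    (hπ1 : ∀ v ∈ C₁, π v ∈ C₁) (hπ2 : ∀ v ∈ C₂, π v ∈ C₂)
    (n₁ n₂ k₁ k₂ : ℕ) (hn₁ : n₁ = C₁.card) (hn₂ : n₂ = C₂.card)
    (hk₁ : k₁ = (C₁.filter (fun v => π v ≠ v)).card)
    (hk₂ : k₂ = (C₂.filter (fun v => π v ≠ v)).card)
    (Eintra Etr : Finset (Sym2 V))
    (hEintra : Eintra = Finset.univ.filter (fun e : Sym2 V =>
      ¬ e.IsDiag ∧ ((∀ a ∈ e, a ∈ C₁) ∨ (∀ a ∈ e, a ∈ C₂)) ∧ Sym2.map π e ≠ e))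
    (hEtr : Etr = Finset.univ.filter (fun e : Sym2 V =>
      ¬ e.IsDiag ∧ ((∀ a ∈ e, a ∈ C₁) ∨ (∀ a ∈ e, a ∈ C₂)) ∧
        ∃ a b, e = s(a, b) ∧ π a = b ∧ π b = a)) :
    (Eintra.card : ℤ)
      = (k₁.choose 2 + k₁ * (n₁ - k₁) + (k₂.choose 2 + k₂ * (n₂ - k₂)) : ℤ)
        - Etr.card := by
  classical
  set A : Finset (Sym2 V) := Finset.univ.filter (fun e : Sym2 V =>
      ¬ e.IsDiag ∧ ((∀ a ∈ e, a ∈ C₁) ∨ (∀ a ∈ e, a ∈ C₂)) ∧ ∃ a ∈ e, π a ≠ a)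
    with hA
  -- Eintra = A \ Etr
  have hEA : Eintra = A \ Etr := by
    rw [hEintra, hEtr, hA]
    ext e
    induction e using Sym2.inductionOn with
    | hf a b =>
      simp only [Finset.mem_filter, Finset.mem_univ, true_and, Finset.mem_sdiff,
        Sym2.map_pair_eq, Sym2.mk_isDiag_iff, Sym2.mem_iff]
      constructor
      · rintro ⟨hd, hC, hne⟩
        refine ⟨⟨hd, hC, ?_⟩, ?_⟩
        · by_contra hall
          push_neg at hall
          exact hne (by rw [hall a (Or.inl rfl), hall b (Or.inr rfl)])
        · rintro ⟨_, _, x, y, heq, hxy, hyx⟩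
          rw [Sym2.eq_iff] at heq
          apply hne
          rcases heq with ⟨rfl, rfl⟩ | ⟨rfl, rfl⟩
          · rw [hxy, hyx]; exact Sym2.eq_swap
          · rw [hxy, hyx]; exact Sym2.eq_swap
      · rintro ⟨⟨hd, hC, a', ha', hmove⟩, hnt⟩
        refine ⟨hd, hC, fun heq => ?_⟩
        rw [Sym2.eq_iff] at heq
        rcases heq with ⟨h1, h2⟩ | ⟨h1, h2⟩
        · rcases ha' with rfl | rfl
          · exact hmove h1
          · exact hmove h2
        · exact hnt ⟨hd, hC, a, b, rfl, h1, h2⟩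
  -- Etr ⊆ A
  have hsub : Etr ⊆ A := by
    rw [hEtr, hA]
    intro e he
    simp only [Finset.mem_filter, Finset.mem_univ, true_and] at *
    obtain ⟨hd, hC, x, y, heq, hxy, hyx⟩ := he
    refine ⟨hd, hC, x, ?_, ?_⟩
    · rw [heq]; exact Sym2.mem_mk_left x y
    · intro h
      apply hd
      have hyx' : y = x := by rw [← hxy, h]
      rw [heq, hyx']
      exact Sym2.mk_isDiag_iff.mpr rfl
  -- split A into the two communities
  set A₁ : Finset (Sym2 V) := Finset.univ.filter (fun e : Sym2 V =>
      ¬ e.IsDiag ∧ (∀ a ∈ e, a ∈ C₁) ∧ ∃ a ∈ e, π a ≠ a)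
  set A₂ : Finset (Sym2 V) := Finset.univ.filter (fun e : Sym2 V =>
      ¬ e.IsDiag ∧ (∀ a ∈ e, a ∈ C₂) ∧ ∃ a ∈ e, π a ≠ a)
  have hunion : A = A₁ ∪ A₂ := by
    ext e
    simp only [A, A₁, A₂, Finset.mem_filter, Finset.mem_univ, true_and,
      Finset.mem_union]
    constructor
    · rintro ⟨hd, hP | hQ, hm⟩
      · exact Or.inl ⟨hd, hP, hm⟩
      · exact Or.inr ⟨hd, hQ, hm⟩
    · rintro (⟨hd, hP, hm⟩ | ⟨hd, hQ, hm⟩)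
      exacts [⟨hd, Or.inl hP, hm⟩, ⟨hd, Or.inr hQ, hm⟩]
  have hdisjA : Disjoint A₁ A₂ := by
    rw [Finset.disjoint_left]
    intro e h1 h2
    simp only [A₁, A₂, Finset.mem_filter, Finset.mem_univ, true_and] at h1 h2
    obtain ⟨a, ha, -⟩ := h1.2.2
    exact Finset.disjoint_left.mp hdisj (h1.2.1 a ha) (h2.2.1 a ha)
  have hcardA : A.card = A₁.card + A₂.card := by
    rw [hunion, Finset.card_union_of_disjoint hdisjA]
  have h1 : A₁.card = n₁.choose 2 - (n₁ - k₁).choose 2 := by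
    simp only [A₁]
    rw [card_moved_pairs π C₁, hn₁, hk₁]
  have h2 : A₂.card = n₂.choose 2 - (n₂ - k₂).choose 2 := by
    simp only [A₂]
    rw [card_moved_pairs π C₂, hn₂, hk₂]
  have hk₁le : k₁ ≤ n₁ := by rw [hk₁, hn₁]; exact Finset.card_filter_le _ _
  have hk₂le : k₂ ≤ n₂ := by rw [hk₂, hn₂]; exact Finset.card_filter_le _ _
  have key : ∀ n k : ℕ, k ≤ n →
      n.choose 2 = k.choose 2 + k * (n - k) + (n - k).choose 2 := by
    intro n k hkn
    obtain ⟨m, rfl⟩ : ∃ m, n = k + m := ⟨n - k, by omega⟩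
    simp only [Nat.add_sub_cancel_left]
    exact choose_two_add k m
  have hid1 := key n₁ k₁ hk₁le
  have hid2 := key n₂ k₂ hk₂le
  have hcard : Eintra.card = A.card - Etr.card := by
    rw [hEA, Finset.card_sdiff_of_subset hsub]
  have hle : Etr.card ≤ A.card := Finset.card_le_card hsub
  have hA1le : (n₁ - k₁).choose 2 ≤ n₁.choose 2 := by omega
  have hA2le : (n₂ - k₂).choose 2 ≤ n₂.choose 2 := by omega
  have hz : (Eintra.card : ℤ) = (A.card : ℤ) - Etr.card := by
    rw [hcard, Nat.cast_sub hle]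
  have h1z : (A₁.card : ℤ) = (n₁.choose 2 : ℤ) - ((n₁ - k₁).choose 2 : ℤ) := by
    rw [h1, Nat.cast_sub hA1le]
  have h2z : (A₂.card : ℤ) = (n₂.choose 2 : ℤ) - ((n₂ - k₂).choose 2 : ℤ) := by
    rw [h2, Nat.cast_sub hA2le]
  have e1 : (n₁.choose 2 : ℤ) - ((n₁ - k₁).choose 2 : ℤ)
      = (k₁.choose 2 : ℤ) + k₁ * ((n₁ : ℤ) - k₁) := by
    rw [hid1]
    push_cast [Nat.cast_sub hk₁le]
    ring
  have e2 : (n₂.choose 2 : ℤ) - ((n₂ - k₂).choose 2 : ℤ)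
      = (k₂.choose 2 : ℤ) + k₂ * ((n₂ : ℤ) - k₂) := by
    rw [hid2]
    push_cast [Nat.cast_sub hk₂le]
    ring
  rw [hz, hcardA]
  push_cast
  linarith [h1z, h2z, e1, e2]
end
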